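/- Row 2 of π° has no false positives on solutions: let a Witness triangle puzzle instance on the m×n grid assign k(s) = 3 triangles to a square s. If L is a solution of the instance and W is a prefix of L whose last vertex is not a corner of s, then cnt(W,s) ≠ 1. -/

import Mathlib

open SimpleGraph

/-- The grid graph on `(m+1) × (n+1)` vertices: two vertices are adjacent iff
the sum of the absolute differences of their coordinates (in `ℤ`) equals `1`. -/
def gridGraph (m n : ℕ) : SimpleGraph (Fin (m+1) × Fin (n+1)) where
  Adj u v := |(u.1 : ℤ) - (v.1 : ℤ)| + |(u.2 : ℤ) - (v.2 : ℤ)| = 1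
  symm := by
    constructor
    intro u v h
    try dsimp only at h ⊢
    rw [abs_sub_comm ((u.1 : ℤ)), abs_sub_comm ((u.2 : ℤ))] at h
    exact h
  loopless := by constructor; intro u h; simp at h

/-- The four corners of the square `s(i,j)`. -/
def squareCorners {m n : ℕ} (i : Fin m) (j : Fin n) :
    Finset (Fin (m+1) × Fin (n+1)) :=
  {(i.castSucc, j.castSucc), (i.succ, j.castSucc),
   (i.castSucc, j.succ), (i.succ, j.succ)}

/-- The four boundary edges of the square `s(i,j)`. -/
def squareEdges {m n : ℕ} (i : Fin m) (j : Fin n) :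
    Finset (Sym2 (Fin (m+1) × Fin (n+1))) :=
  { s((i.castSucc, j.castSucc), (i.succ, j.castSucc)),
    s((i.castSucc, j.succ), (i.succ, j.succ)),
    s((i.castSucc, j.castSucc), (i.castSucc, j.succ)),
    s((i.succ, j.castSucc), (i.succ, j.succ)) }

/-- The number of edges of the walk `W` lying on the boundary of square `s(i,j)`. -/
def cnt {m n : ℕ} {u v : Fin (m+1) × Fin (n+1)}
    (W : (gridGraph m n).Walk u v) (i : Fin m) (j : Fin n) : ℕ :=
  (W.edges.filter (fun e => e ∈ squareEdges i j)).length

section Lemmas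
variable {V : Type*} [DecidableEq V] {G : SimpleGraph V}

/-- in any walk, edges have endpoints in support -/
lemma mem_support_of_mem_edges' {a b u : V} (p : G.Walk a b) {e : Sym2 V}
    (he : e ∈ p.edges) (hu : u ∈ e) : u ∈ p.support := by
  induction e with
  | h x y =>
    rw [Sym2.mem_iff] at hu
    rcases hu with rfl | rfl
    · exact p.fst_mem_support_of_mem_edges he
    · exact p.snd_mem_support_of_mem_edges he

/-- edges containing a vertex not in support: none -/
lemma filter_eq_nil_of_not_mem_support {a b u : V} (p : G.Walk a b)
    (hu : u ∉ p.support) : p.edges.filter (fun e => u ∈ e) = [] := by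
  rw [List.filter_eq_nil_iff]
  intro e he
  simp only [decide_eq_true_eq]
  intro hmem
  exact hu (mem_support_of_mem_edges' p he hmem)

/-- Lemma A: a path has at most one edge containing its first vertex. -/
lemma lemmaA {a b : V} (p : G.Walk a b) (hp : p.IsPath) :
    (p.edges.filter (fun e => a ∈ e)).length ≤ 1 := by
  cases p with
  | nil => simp
  | cons h q =>
    rw [Walk.cons_isPath_iff] at hp
    rw [Walk.edges_cons, List.filter_cons]
    have := filter_eq_nil_of_not_mem_support q hp.2
    rw [this]
    split <;> simp

/-- Lemma B: a path has at most two edges containing any vertex. -/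
lemma lemmaB {a b u : V} (p : G.Walk a b) (hp : p.IsPath) :
    (p.edges.filter (fun e => u ∈ e)).length ≤ 2 := by
  induction p with
  | nil => simp
  | @cons x y z h q ih =>
    rw [Walk.cons_isPath_iff] at hp
    rw [Walk.edges_cons, List.filter_cons]
    by_cases hux : u = x
    · subst hux
      have := filter_eq_nil_of_not_mem_support q hp.2
      rw [this]
      split <;> simp
    · by_cases huy : u = y
      · subst huy
        have := lemmaA q hp.1
        split
        · simp only [List.length_cons]; omega
        · omega
      · have := ih hp.1
        split
        · next hcond =>
            exfalso
            simp only [decide_eq_true_eq, Sym2.mem_iff] at hcond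
            rcases hcond with rfl | rfl
            · exact hux rfl
            · exact huy rfl
        · exact this

/-- Lemma D: a nontrivial walk has an edge containing its first vertex. -/
lemma lemmaD {a b : V} (p : G.Walk a b) (hab : a ≠ b) :
    ∃ e ∈ p.edges, a ∈ e := by
  cases p with
  | nil => exact absurd rfl hab
  | cons h q => exact ⟨_, List.mem_cons_self, Sym2.mem_mk_left _ _⟩

/-- Lemma C: an interior vertex of a walk is in at least two edges. -/
lemma lemmaC {a b u : V} (p : G.Walk a b) (hu : u ∈ p.support)
    (hua : u ≠ a) (hub : u ≠ b) :
    2 ≤ (p.edges.filter (fun e => u ∈ e)).length := by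
  induction p with
  | nil => simp at hu; exact absurd hu hua
  | @cons x y z h q ih =>
    rw [Walk.support_cons, List.mem_cons] at hu
    rcases hu with rfl | hu
    · exact absurd rfl hua
    rw [Walk.edges_cons, List.filter_cons]
    by_cases huy : u = y
    · subst huy
      obtain ⟨e, he, hue⟩ := lemmaD q hub
      have hne : (q.edges.filter (fun e => u ∈ e)) ≠ [] := by
        intro hnil
        have : e ∈ q.edges.filter (fun e => u ∈ e) := by
          rw [List.mem_filter]; exact ⟨he, by simpa using hue⟩
        rw [hnil] at this; simp at this
      have h1 : 1 ≤ (q.edges.filter (fun e => u ∈ e)).length :=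
        List.length_pos_iff.mpr hne
      rw [if_pos (by simp : decide (u ∈ s(x, u)) = true)]
      simp only [List.length_cons]
      omega
    · have := ih hu huy hub
      split
      · simp only [List.length_cons]; omega
      · exact this

/-- two distinct members force length ≥ 2 -/
lemma two_le_length_of_mem {α : Type*} [DecidableEq α] {l : List α} {a b : α}
    (ha : a ∈ l) (hb : b ∈ l) (hab : a ≠ b) : 2 ≤ l.length := by
  have h1 : ({a, b} : Finset α) ⊆ l.toFinset := by
    intro x hx
    simp only [Finset.mem_insert, Finset.mem_singleton] at hx
    rcases hx with rfl | rfl <;> simp [ha, hb]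
  have h2 : ({a, b} : Finset α).card = 2 := Finset.card_pair hab
  calc 2 = ({a, b} : Finset α).card := h2.symm
    _ ≤ l.toFinset.card := Finset.card_le_card h1
    _ ≤ l.length := l.toFinset_card_le

end Lemmas

section KeyPart

/-- three distinct members force length ≥ 3 -/
lemma three_le_length_of_mem {α : Type*} [DecidableEq α] {l : List α} {a b c : α}
    (ha : a ∈ l) (hb : b ∈ l) (hc : c ∈ l)
    (hab : a ≠ b) (hac : a ≠ c) (hbc : b ≠ c) : 3 ≤ l.length := by
  have h1 : ({a, b, c} : Finset α) ⊆ l.toFinset := by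
    intro x hx
    simp only [Finset.mem_insert, Finset.mem_singleton] at hx
    rcases hx with rfl | rfl | rfl <;> simp [ha, hb, hc]
  have h2 : ({a, b, c} : Finset α).card = 3 := by
    rw [Finset.card_insert_of_notMem (by simp [hab, hac]),
      Finset.card_insert_of_notMem (by simp [hbc]), Finset.card_singleton]
  calc 3 = ({a, b, c} : Finset α).card := h2.symm
    _ ≤ l.toFinset.card := Finset.card_le_card h1
    _ ≤ l.length := l.toFinset_card_le

lemma key {m n : ℕ} {vStart vGoal v : Fin (m+1) × Fin (n+1)}
    {L : (gridGraph m n).Walk vStart vGoal} (hL : L.IsPath)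
    {i : Fin m} {j : Fin n}
    {W : (gridGraph m n).Walk vStart v} {X : (gridGraph m n).Walk v vGoal}
    (hLX : L = W.append X) (hv : v ∉ squareCorners i j)
    (hcntW : cnt W i j = 1)
    {f g : Sym2 (Fin (m+1) × Fin (n+1))} {u : Fin (m+1) × Fin (n+1)}
    (hf : f ∈ squareEdges i j) (hg : g ∈ squareEdges i j) (hfg : f ≠ g)
    (huf : u ∈ f) (hug : u ∈ g) (hu : u ∈ squareCorners i j)
    (hfW : f ∈ W.edges) (hgL : g ∈ L.edges) : False := by
  have hWpath : W.IsPath := by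
    rw [hLX] at hL; exact hL.of_append_left
  have hfL : f ∈ L.edges := by
    rw [hLX, Walk.edges_append, List.mem_append]; exact Or.inl hfW
  have huv : u ≠ v := fun h => hv (h ▸ hu)
  have hfFL : f ∈ L.edges.filter (fun e => u ∈ e) :=
    List.mem_filter.mpr ⟨hfL, by simpa using huf⟩
  have hgFL : g ∈ L.edges.filter (fun e => u ∈ e) :=
    List.mem_filter.mpr ⟨hgL, by simpa using hug⟩
  by_cases hus : u = vStart
  · subst hus
    have := lemmaA L hL
    have := two_le_length_of_mem hfFL hgFL hfg
    omega
  · have h2W : 2 ≤ (W.edges.filter (fun e => u ∈ e)).length :=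
      lemmaC W (mem_support_of_mem_edges' W hfW huf) hus huv
    have h2L : (L.edges.filter (fun e => u ∈ e)).length ≤ 2 := lemmaB L hL
    have hmemfg : ∀ e ∈ L.edges.filter (fun e => u ∈ e), e = f ∨ e = g := by
      intro e he
      by_contra hcon
      push_neg at hcon
      have := three_le_length_of_mem he hfFL hgFL hcon.1 hcon.2 hfg
      omega
    have hnodupW : (W.edges.filter (fun e => u ∈ e)).Nodup :=
      (List.filter_sublist).nodup hWpath.isTrail.edges_nodup
    have hsubW : (W.edges.filter (fun e => u ∈ e)).toFinset ⊆ {f, g} := by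
      intro e he
      rw [List.mem_toFinset, List.mem_filter] at he
      have : e ∈ L.edges.filter (fun e => u ∈ e) := by
        rw [List.mem_filter]
        refine ⟨?_, he.2⟩
        rw [hLX, Walk.edges_append, List.mem_append]; exact Or.inl he.1
      rcases hmemfg e this with rfl | rfl <;> simp
    have hcardW : (W.edges.filter (fun e => u ∈ e)).toFinset.card =
        (W.edges.filter (fun e => u ∈ e)).length := List.toFinset_card_of_nodup hnodupW
    have hcard2 : ({f, g} : Finset _).card = 2 := Finset.card_pair hfg
    have heq : (W.edges.filter (fun e => u ∈ e)).toFinset = {f, g} :=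
      Finset.eq_of_subset_of_card_le hsubW (by omega)
    have hgW : g ∈ W.edges := by
      have : g ∈ (W.edges.filter (fun e => u ∈ e)).toFinset := by
        rw [heq]; simp
      rw [List.mem_toFinset, List.mem_filter] at this
      exact this.1
    -- now cnt W ≥ 2
    have hfC : f ∈ W.edges.filter (fun e => e ∈ squareEdges i j) :=
      List.mem_filter.mpr ⟨hfW, by simpa using hf⟩
    have hgC : g ∈ W.edges.filter (fun e => e ∈ squareEdges i j) :=
      List.mem_filter.mpr ⟨hgW, by simpa using hg⟩
    have := two_le_length_of_mem hfC hgC hfg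
    rw [cnt] at hcntW
    omega

end KeyPart

/-- Row 2 of the learned predicate has no false positives on solutions: if a
square carries a three-triangle constraint, `L` solves the puzzle, and `W` is a
prefix of `L` ending at a vertex which is not a corner of that square, then `W`
does not contain exactly one boundary edge of the square. -/
theorem row2_no_false_positives {m n : ℕ}
    {vStart vGoal v : Fin (m+1) × Fin (n+1)}
    (k : Fin m → Fin n → Option ℕ)
    (hk : ∀ i j t, k i j = some t → t = 1 ∨ t = 2 ∨ t = 3)
    (L : (gridGraph m n).Walk vStart vGoal) (hL : L.IsPath)
    (hsol : ∀ i j t, k i j = some t → cnt L i j = t)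
    (i : Fin m) (j : Fin n) (h3 : k i j = some 3)
    (W : (gridGraph m n).Walk vStart v)
    (hpre : ∃ X : (gridGraph m n).Walk v vGoal, L = W.append X)
    (hv : v ∉ squareCorners i j) :
    cnt W i j ≠ 1 := by
  intro hcnt1
  obtain ⟨X, hLX⟩ := hpre
  have hcntL : cnt L i j = 3 := hsol i j 3 h3
  set eA : Sym2 (Fin (m+1) × Fin (n+1)) := s((i.castSucc, j.castSucc), (i.succ, j.castSucc)) with heA
  set eB : Sym2 (Fin (m+1) × Fin (n+1)) := s((i.castSucc, j.succ), (i.succ, j.succ)) with heB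
  set eC : Sym2 (Fin (m+1) × Fin (n+1)) := s((i.castSucc, j.castSucc), (i.castSucc, j.succ)) with heC
  set eD : Sym2 (Fin (m+1) × Fin (n+1)) := s((i.succ, j.castSucc), (i.succ, j.succ)) with heD
  have hii : i.castSucc ≠ i.succ := (Fin.castSucc_lt_succ : i.castSucc < i.succ).ne
  have hjj : j.castSucc ≠ j.succ := (Fin.castSucc_lt_succ : j.castSucc < j.succ).ne
  have hii' : i.succ ≠ i.castSucc := hii.symm
  have hjj' : j.succ ≠ j.castSucc := hjj.symm
  have hAB : eA ≠ eB := by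
    simp only [heA, heB, ne_eq, Sym2.eq_iff, Prod.mk.injEq]
    tauto
  have hAC : eA ≠ eC := by
    simp only [heA, heC, ne_eq, Sym2.eq_iff, Prod.mk.injEq]
    tauto
  have hAD : eA ≠ eD := by
    simp only [heA, heD, ne_eq, Sym2.eq_iff, Prod.mk.injEq]
    tauto
  have hBC : eB ≠ eC := by
    simp only [heB, heC, ne_eq, Sym2.eq_iff, Prod.mk.injEq]
    tauto
  have hBD : eB ≠ eD := by
    simp only [heB, heD, ne_eq, Sym2.eq_iff, Prod.mk.injEq]
    tauto
  have hCD : eC ≠ eD := by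
    simp only [heC, heD, ne_eq, Sym2.eq_iff, Prod.mk.injEq]
    tauto
  have hsqE : squareEdges i j = {eA, eB, eC, eD} := rfl
  have hcardSq : (squareEdges i j).card = 4 := by
    rw [hsqE]
    rw [Finset.card_insert_of_notMem (by simp [hAB, hAC, hAD]),
      Finset.card_insert_of_notMem (by simp [hBC, hBD]),
      Finset.card_insert_of_notMem (by simp [hCD]), Finset.card_singleton]
  have hmiss : ∀ a b : Sym2 (Fin (m+1) × Fin (n+1)), a ∈ squareEdges i j →
      b ∈ squareEdges i j → a ≠ b → (a ∈ L.edges ∨ b ∈ L.edges) := by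
    intro a b ha hb hab
    by_contra hcon
    push_neg at hcon
    have hsub : (L.edges.filter (fun e => e ∈ squareEdges i j)).toFinset ⊆
        squareEdges i j \ {a, b} := by
      intro e he
      rw [List.mem_toFinset, List.mem_filter] at he
      rw [Finset.mem_sdiff]
      refine ⟨by simpa using he.2, ?_⟩
      simp only [Finset.mem_insert, Finset.mem_singleton]
      rintro (rfl | rfl)
      · exact hcon.1 he.1
      · exact hcon.2 he.1
    have habsub : ({a, b} : Finset _) ⊆ squareEdges i j := by
      intro x hx
      simp only [Finset.mem_insert, Finset.mem_singleton] at hx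
      rcases hx with rfl | rfl <;> assumption
    have hc1 : (squareEdges i j \ ({a, b} : Finset _)).card = 2 := by
      rw [Finset.card_sdiff_of_subset habsub, hcardSq, Finset.card_pair hab]
    have hnodup : (L.edges.filter (fun e => e ∈ squareEdges i j)).Nodup :=
      (List.filter_sublist).nodup hL.isTrail.edges_nodup
    have hclen : (L.edges.filter (fun e => e ∈ squareEdges i j)).toFinset.card = 3 := by
      rw [List.toFinset_card_of_nodup hnodup]
      exact hcntL
    have := Finset.card_le_card hsub
    omega
  have hone : ∃ f, W.edges.filter (fun e => e ∈ squareEdges i j) = [f] :=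
    List.length_eq_one_iff.mp hcnt1
  obtain ⟨f, hfeq⟩ := hone
  have hfW : f ∈ W.edges ∧ f ∈ squareEdges i j := by
    have : f ∈ W.edges.filter (fun e => e ∈ squareEdges i j) := by
      rw [hfeq]; exact List.mem_singleton_self f
    rw [List.mem_filter] at this
    exact ⟨this.1, by simpa using this.2⟩
  have hf4 : f = eA ∨ f = eB ∨ f = eC ∨ f = eD := by
    have := hfW.2
    rw [hsqE] at this
    simpa using this
  have hA : eA ∈ squareEdges i j := by rw [hsqE]; simp
  have hB : eB ∈ squareEdges i j := by rw [hsqE]; simp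
  have hC : eC ∈ squareEdges i j := by rw [hsqE]; simp
  have hD : eD ∈ squareEdges i j := by rw [hsqE]; simp
  rcases hf4 with rfl | rfl | rfl | rfl
  · rcases hmiss eC eD hC hD hCD with hg | hg
    · exact key hL hLX hv hcnt1 hA hC hAC
        (by rw [heA]; exact Sym2.mem_mk_left _ _)
        (by rw [heC]; exact Sym2.mem_mk_left _ _)
        (by simp [squareCorners]) hfW.1 hg
    · exact key hL hLX hv hcnt1 hA hD hAD
        (by rw [heA]; exact Sym2.mem_mk_right _ _)
        (by rw [heD]; exact Sym2.mem_mk_left _ _)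
        (by simp [squareCorners]) hfW.1 hg
  · rcases hmiss eC eD hC hD hCD with hg | hg
    · exact key hL hLX hv hcnt1 hB hC hBC
        (by rw [heB]; exact Sym2.mem_mk_left _ _)
        (by rw [heC]; exact Sym2.mem_mk_right _ _)
        (by simp [squareCorners]) hfW.1 hg
    · exact key hL hLX hv hcnt1 hB hD hBD
        (by rw [heB]; exact Sym2.mem_mk_right _ _)
        (by rw [heD]; exact Sym2.mem_mk_right _ _)
        (by simp [squareCorners]) hfW.1 hg
  · rcases hmiss eA eB hA hB hAB with hg | hg
    · exact key hL hLX hv hcnt1 hC hA hAC.symm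
        (by rw [heC]; exact Sym2.mem_mk_left _ _)
        (by rw [heA]; exact Sym2.mem_mk_left _ _)
        (by simp [squareCorners]) hfW.1 hg
    · exact key hL hLX hv hcnt1 hC hB hBC.symm
        (by rw [heC]; exact Sym2.mem_mk_right _ _)
        (by rw [heB]; exact Sym2.mem_mk_left _ _)
        (by simp [squareCorners]) hfW.1 hg
  · rcases hmiss eA eB hA hB hAB with hg | hg
    · exact key hL hLX hv hcnt1 hD hA hAD.symm
        (by rw [heD]; exact Sym2.mem_mk_left _ _)
        (by rw [heA]; exact Sym2.mem_mk_right _ _)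
        (by simp [squareCorners]) hfW.1 hg
    · exact key hL hLX hv hcnt1 hD hB hBD.symm
        (by rw [heD]; exact Sym2.mem_mk_right _ _)
        (by rw [heB]; exact Sym2.mem_mk_right _ _)
        (by simp [squareCorners]) hfW.1 hg
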